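/- arXiv:2411.17393 — 2 statements merged into one kernel-verified Lean document; each statement's English description precedes it below -/
import Mathlib

section
/- With the setup of the Poisson parametric test (Y ~ Poisson((π₁+π₂)p) conditional on independent Poissons π₁, π₂ with means m₁U₁, m₂U₂, p = U₁/U, U = U₁+U₂, X₂ = Y − π₁), Var(X₂) = [m₁U₁(U₁U + U₂²) + m₂U₁U₂(2U₁+U₂)]/U². -/
open MeasureTheory ProbabilityTheory




section Aux

lemma hasSum_congr' {ι α : Type*} [AddCommMonoid α] [TopologicalSpace α]
    {f g : ι → α} {a b : α} (h : HasSum f a) (hfg : ∀ i, f i = g i) (hab : a = b) :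
    HasSum g b := hab ▸ (funext hfg : f = g) ▸ h

noncomputable def pois (x : ℝ) (k : ℕ) : ℝ := Real.exp (-x) * x ^ k / (Nat.factorial k)

lemma pois_nonneg {x : ℝ} (hx : 0 ≤ x) (k : ℕ) : 0 ≤ pois x k := by
  unfold pois; positivity

lemma hasSum_pois_one (x : ℝ) : HasSum (pois x) 1 := by
  have h := NormedSpace.expSeries_div_hasSum_exp x
  rw [← Real.exp_eq_exp_ℝ] at h
  have h2 := h.mul_left (Real.exp (-x))
  have hx : Real.exp (-x) * Real.exp x = 1 := by
    rw [← Real.exp_add]; simp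
  rw [hx] at h2
  exact hasSum_congr' h2 (fun k => by unfold pois; ring) rfl

lemma pois_succ (x : ℝ) (k : ℕ) : ((k : ℝ) + 1) * pois x (k + 1) = x * pois x k := by
  unfold pois
  rw [Nat.factorial_succ, pow_succ]
  have hk : ((Nat.factorial k : ℝ)) ≠ 0 := Nat.cast_ne_zero.2 (Nat.factorial_ne_zero k)
  have hk1 : ((k : ℝ) + 1) ≠ 0 := by positivity
  push_cast
  field_simp

lemma hasSum_pois_mul (x : ℝ) : HasSum (fun k : ℕ => (k : ℝ) * pois x k) x := by
  have h := (hasSum_pois_one x).mul_left x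
  have h' : HasSum (fun k : ℕ => ((k + 1 : ℕ) : ℝ) * pois x (k + 1)) (x * 1) :=
    hasSum_congr' h (fun k => by push_cast; rw [← pois_succ x k]) rfl
  have h'' := (hasSum_nat_add_iff (f := fun k : ℕ => (k : ℝ) * pois x k) 1).mp h'
  simp only [Finset.range_one, Finset.sum_singleton, Nat.cast_zero, zero_mul, add_zero,
    mul_one] at h''
  exact h''

lemma hasSum_pois_sq (x : ℝ) : HasSum (fun k : ℕ => (k : ℝ) ^ 2 * pois x k) (x + x ^ 2) := by
  have h := ((hasSum_pois_mul x).mul_left x).add ((hasSum_pois_one x).mul_left x)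
  have h' : HasSum (fun k : ℕ => ((k + 1 : ℕ) : ℝ) ^ 2 * pois x (k + 1)) (x * x + x * 1) := by
    refine hasSum_congr' h (fun k => ?_) rfl
    have := pois_succ x k
    push_cast
    nlinarith [this]
  have h'' := (hasSum_nat_add_iff (f := fun k : ℕ => (k : ℝ) ^ 2 * pois x k) 1).mp h'
  simp only [Finset.range_one, Finset.sum_singleton, Nat.cast_zero, add_zero, mul_one] at h''
  rw [show x + x ^ 2 = x * x + x + 0 ^ 2 * pois x 0 by ring]
  exact h''

lemma hasSum_pois_quad (x α β γ : ℝ) :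
    HasSum (fun k : ℕ => (α * (k : ℝ) ^ 2 + β * k + γ) * pois x k)
      (α * (x + x ^ 2) + β * x + γ) := by
  have h := (((hasSum_pois_sq x).mul_left α).add ((hasSum_pois_mul x).mul_left β)).add
    ((hasSum_pois_one x).mul_left γ)
  exact hasSum_congr' h (fun k => by ring) (by ring)

end Aux


lemma nullMeasurableSet_of_add_compl {Ω : Type*} [MeasurableSpace Ω] (μ : Measure Ω)
    [IsFiniteMeasure μ] (s : Set Ω) (h : μ s + μ sᶜ ≤ μ Set.univ) :
    NullMeasurableSet s μ := by
  obtain ⟨t, hst, htm, htμ⟩ := exists_measurable_superset μ s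
  obtain ⟨t', hst', htm', htμ'⟩ := exists_measurable_superset μ sᶜ
  have huniv : μ (t ∪ t') = μ Set.univ := by
    refine le_antisymm (measure_mono (Set.subset_univ _)) (measure_mono ?_)
    intro x _
    by_cases hx : x ∈ s
    · exact Set.mem_union_left _ (hst hx)
    · exact Set.mem_union_right _ (hst' hx)
  have hkey : μ (t ∩ t') = 0 := by
    have h2 : μ (t ∪ t') + μ (t ∩ t') = μ t + μ t' := measure_union_add_inter t htm'
    rw [huniv, htμ, htμ'] at h2
    have h3 : μ Set.univ + μ (t ∩ t') ≤ μ Set.univ + 0 := by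
      rw [add_zero]; exact h2.le.trans h
    have := (ENNReal.add_le_add_iff_left (measure_ne_top μ _)).mp h3
    exact le_antisymm this zero_le
  have hts : s =ᵐ[μ] t := by
    rw [MeasureTheory.ae_eq_set]
    constructor
    · rw [Set.diff_eq_empty.2 hst]; exact measure_empty
    · refine measure_mono_null ?_ hkey
      intro x hx
      exact ⟨hx.1, hst' hx.2⟩
  exact (htm.nullMeasurableSet).congr hts.symm

lemma hasSum_integral_of_partition {Ω ι : Type*} [MeasurableSpace Ω] [Countable ι]
    (μ : Measure Ω) [IsProbabilityMeasure μ] (A : ι → Set Ω)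
    (hdisj : Pairwise (Function.onFun Disjoint A)) (hcov : (⋃ i, A i) = Set.univ)
    (hsum : ∑' i, μ (A i) = 1) (f : Ω → ℝ) (c : ι → ℝ)
    (hfc : ∀ i, ∀ ω ∈ A i, f ω = c i) (hint : Integrable f μ) :
    HasSum (fun i => c i * (μ (A i)).toReal) (∫ ω, f ω ∂μ) := by
  classical
  have hnm : ∀ i, NullMeasurableSet (A i) μ := by
    intro i
    apply nullMeasurableSet_of_add_compl
    have hcompl : μ (A i)ᶜ ≤ ∑' j, if j = i then 0 else μ (A j) := by
      have hsub : (A i)ᶜ ⊆ ⋃ j, (if j = i then (∅ : Set Ω) else A j) := by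
        intro ω hω
        have hmem : ω ∈ ⋃ j, A j := hcov ▸ Set.mem_univ ω
        obtain ⟨j, hj⟩ := Set.mem_iUnion.1 hmem
        have hji : j ≠ i := fun h => hω (h ▸ hj)
        exact Set.mem_iUnion.2 ⟨j, by simp [hji, hj]⟩
      calc μ (A i)ᶜ ≤ μ (⋃ j, (if j = i then (∅ : Set Ω) else A j)) := measure_mono hsub
        _ ≤ ∑' j, μ (if j = i then (∅ : Set Ω) else A j) := measure_iUnion_le _
        _ = ∑' j, if j = i then 0 else μ (A j) := by
            refine tsum_congr fun j => ?_
            split <;> simp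
    calc μ (A i) + μ (A i)ᶜ ≤ μ (A i) + ∑' j, if j = i then 0 else μ (A j) :=
          add_le_add_right hcompl _
      _ = ∑' j, μ (A j) := (ENNReal.tsum_eq_add_tsum_ite (f := fun j => μ (A j)) i).symm
      _ = 1 := hsum
      _ = μ Set.univ := measure_univ.symm
  have hd' : Pairwise (Function.onFun (MeasureTheory.AEDisjoint μ) A) := fun i j hij => (hdisj hij).aedisjoint
  have hfi : IntegrableOn f (⋃ i, A i) μ := by rw [hcov]; exact hint.integrableOn
  have H := hasSum_integral_iUnion_ae hnm hd' hfi
  rw [hcov, setIntegral_univ] at H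
  have hterm : ∀ i, ∫ ω in A i, f ω ∂μ = c i * (μ (A i)).toReal := by
    intro i
    rw [setIntegral_congr_ae₀ (g := fun _ => c i) (hnm i)
      (Filter.Eventually.of_forall (fun ω hω => hfc i ω hω)), setIntegral_const,
      smul_eq_mul, mul_comm, measureReal_def]
  rwa [show (fun i => ∫ ω in A i, f ω ∂μ) = fun i => c i * (μ (A i)).toReal from funext hterm] at H

lemma hasSum_prod_of_nonneg {β γ : Type*} {f : β × γ → ℝ} (hf : ∀ p, 0 ≤ f p)
    {g : β → ℝ} (hfg : ∀ b, HasSum (fun c => f (b, c)) (g b)) {S : ℝ} (hg : HasSum g S) :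
    HasSum f S := by
  have hsummable : Summable f := by
    rw [summable_prod_of_nonneg hf]
    refine ⟨fun b => (hfg b).summable, ?_⟩
    have : (fun b => ∑' c, f (b, c)) = g := funext fun b => (hfg b).tsum_eq
    rw [this]; exact hg.summable
  have htsum : ∑' p, f p = S := by
    rw [Summable.tsum_prod' hsummable fun b => (hfg b).summable]
    have : (fun b => ∑' c, f (b, c)) = g := funext fun b => (hfg b).tsum_eq
    rw [this]; exact hg.tsum_eq
  exact htsum ▸ hsummable.hasSum

/-- Let π₁, π₂ be independent Poisson with means m₁U₁, m₂U₂, p = U₁/(U₁+U₂), and conditional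
on (π₁,π₂) let Y ~ Poisson((π₁+π₂)p). Then X₂ = Y − π₁ satisfies
Var(X₂) = [m₁U₁(U₁U + U₂²) + m₂U₁U₂(2U₁+U₂)]/U², where U = U₁+U₂. -/
theorem poisson_test_statistic_variance {Ω : Type*} [MeasurableSpace Ω] (μ : Measure Ω)
    [IsProbabilityMeasure μ] (π₁ π₂ Y : Ω → ℕ) (m₁ m₂ U₁ U₂ : ℝ)
    (hm₁ : 0 < m₁) (hm₂ : 0 < m₂) (hU₁ : 0 < U₁) (hU₂ : 0 < U₂)
    (hπ₁ : ∀ k : ℕ, μ {ω | π₁ ω = k} =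
      ENNReal.ofReal (Real.exp (-(m₁ * U₁)) * (m₁ * U₁) ^ k / (Nat.factorial k)))
    (hπ₂ : ∀ k : ℕ, μ {ω | π₂ ω = k} =
      ENNReal.ofReal (Real.exp (-(m₂ * U₂)) * (m₂ * U₂) ^ k / (Nat.factorial k)))
    (hindep : IndepFun π₁ π₂ μ)
    (hY : ∀ n₁ n₂ k : ℕ,
      μ ({ω | Y ω = k} ∩ {ω | π₁ ω = n₁} ∩ {ω | π₂ ω = n₂}) =
        ENNReal.ofReal (Real.exp (-(((n₁ + n₂ : ℕ) : ℝ) * (U₁ / (U₁ + U₂)))) *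
            (((n₁ + n₂ : ℕ) : ℝ) * (U₁ / (U₁ + U₂))) ^ k / (Nat.factorial k)) *
          μ ({ω | π₁ ω = n₁} ∩ {ω | π₂ ω = n₂}))
    (hint : MeasureTheory.MemLp (fun ω => (Y ω : ℝ) - (π₁ ω : ℝ)) 2 μ) :
    variance (fun ω => (Y ω : ℝ) - (π₁ ω : ℝ)) μ =
      (m₁ * U₁ * (U₁ * (U₁ + U₂) + U₂ ^ 2) + m₂ * U₁ * U₂ * (2 * U₁ + U₂)) /
        (U₁ + U₂) ^ 2 := by
  classical
  have hU : (0:ℝ) < U₁ + U₂ := by linarith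
  have hUne : (U₁ + U₂ : ℝ) ≠ 0 := ne_of_gt hU
  set P : ℝ := U₁ / (U₁ + U₂) with hPdef
  have hP0 : 0 ≤ P := by positivity
  set L1 : ℝ := m₁ * U₁ with hL1def
  set L2 : ℝ := m₂ * U₂ with hL2def
  have hL10 : 0 ≤ L1 := le_of_lt (mul_pos hm₁ hU₁)
  have hL20 : 0 ≤ L2 := le_of_lt (mul_pos hm₂ hU₂)
  -- the partition and weights
  set A : ℕ × ℕ × ℕ → Set Ω :=
    fun i => {ω | Y ω = i.2.2} ∩ {ω | π₁ ω = i.1} ∩ {ω | π₂ ω = i.2.1} with hAdef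
  set q : ℕ × ℕ × ℕ → ℝ :=
    fun i => pois (((i.1 + i.2.1 : ℕ) : ℝ) * P) i.2.2 * (pois L1 i.1 * pois L2 i.2.1)
    with hqdef
  have harg : ∀ n₁ n₂ : ℕ, (0:ℝ) ≤ ((n₁ + n₂ : ℕ) : ℝ) * P :=
    fun n₁ n₂ => mul_nonneg (Nat.cast_nonneg _) hP0
  have hq0 : ∀ i, 0 ≤ q i := by
    rintro ⟨n₁, n₂, k⟩
    exact mul_nonneg (pois_nonneg (harg n₁ n₂) k)
      (mul_nonneg (pois_nonneg hL10 n₁) (pois_nonneg hL20 n₂))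
  -- measure of the pieces
  have hπ : ∀ n₁ n₂ : ℕ, μ ({ω | π₁ ω = n₁} ∩ {ω | π₂ ω = n₂}) =
      ENNReal.ofReal (pois L1 n₁ * pois L2 n₂) := by
    intro n₁ n₂
    have h := hindep.measure_inter_preimage_eq_mul {n₁} {n₂}
      (measurableSet_singleton _) (measurableSet_singleton _)
    have h1 : π₁ ⁻¹' {n₁} = {ω | π₁ ω = n₁} := rfl
    have h2 : π₂ ⁻¹' {n₂} = {ω | π₂ ω = n₂} := rfl
    rw [h1, h2] at h
    rw [h, hπ₁ n₁, hπ₂ n₂, ← ENNReal.ofReal_mul (by positivity)]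
    rfl
  have hμA : ∀ i, μ (A i) = ENNReal.ofReal (q i) := by
    rintro ⟨n₁, n₂, k⟩
    have h := hY n₁ n₂ k
    rw [hπ n₁ n₂] at h
    rw [hAdef, hqdef]
    simp only
    rw [h, ← ENNReal.ofReal_mul (by positivity)]
    rfl
  -- covering and disjointness
  have hcov : (⋃ i, A i) = Set.univ := by
    ext ω
    simp only [Set.mem_iUnion, Set.mem_univ, iff_true]
    exact ⟨(π₁ ω, π₂ ω, Y ω), ⟨rfl, rfl⟩, rfl⟩
  have hdisj : Pairwise (Function.onFun Disjoint A) := by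
    rintro ⟨a, b, c⟩ ⟨a', b', c'⟩ hij
    rw [Function.onFun, Set.disjoint_left]
    rintro ω ⟨⟨hY1, h11⟩, h21⟩ ⟨⟨hY2, h12⟩, h22⟩
    apply hij
    simp only [Set.mem_setOf_eq] at hY1 h11 h21 hY2 h12 h22
    simp only [Prod.mk.injEq]
    exact ⟨h11 ▸ h12, h21 ▸ h22, hY1 ▸ hY2⟩
  -- total mass of q
  have hqsum : HasSum q 1 := by
    apply hasSum_prod_of_nonneg hq0 ?_ (hasSum_pois_one L1)
    intro n₁
    apply hasSum_prod_of_nonneg (fun x => hq0 (n₁, x)) ?_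
      (hasSum_congr' ((hasSum_pois_one L2).mul_left (pois L1 n₁)) (fun n₂ => rfl) (mul_one _))
    intro n₂
    exact hasSum_congr'
      ((hasSum_pois_one (((n₁ + n₂ : ℕ) : ℝ) * P)).mul_right (pois L1 n₁ * pois L2 n₂))
      (fun k => rfl) (one_mul _)
  have hsum1 : ∑' i, μ (A i) = 1 := by
    calc ∑' i, μ (A i) = ∑' i, ENNReal.ofReal (q i) := tsum_congr fun i => hμA i
      _ = ENNReal.ofReal (∑' i, q i) := (ENNReal.ofReal_tsum_of_nonneg hq0 hqsum.summable).symm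
      _ = 1 := by rw [hqsum.tsum_eq, ENNReal.ofReal_one]
  -- integrability
  have hX1 : Integrable (fun ω => (Y ω : ℝ) - (π₁ ω : ℝ)) μ := hint.integrable one_le_two
  have hX2 : Integrable (fun ω => ((Y ω : ℝ) - (π₁ ω : ℝ)) ^ 2) μ := hint.integrable_sq
  -- HasSum representations of the two moments
  have hfc1 : ∀ i, ∀ ω ∈ A i, (Y ω : ℝ) - (π₁ ω : ℝ) = (i.2.2 : ℝ) - (i.1 : ℝ) := by
    rintro ⟨n₁, n₂, k⟩ ω ⟨⟨h1, h2⟩, h3⟩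
    simp only [Set.mem_setOf_eq] at h1 h2
    rw [h1, h2]
  have HS1 := hasSum_integral_of_partition μ A hdisj hcov hsum1 _
    (fun i => (i.2.2 : ℝ) - (i.1 : ℝ)) hfc1 hX1
  have HS2 := hasSum_integral_of_partition μ A hdisj hcov hsum1 _
    (fun i => ((i.2.2 : ℝ) - (i.1 : ℝ)) ^ 2)
    (fun i ω hω => by rw [hfc1 i ω hω]) hX2
  have htoReal : ∀ i, (μ (A i)).toReal = q i := fun i => by
    rw [hμA i, ENNReal.toReal_ofReal (hq0 i)]
  have HS1' : HasSum (fun i => ((i.2.2 : ℝ) - (i.1 : ℝ)) * q i)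
      (∫ ω, ((Y ω : ℝ) - (π₁ ω : ℝ)) ∂μ) :=
    hasSum_congr' HS1 (fun i => by rw [htoReal i]) rfl
  have HS2' : HasSum (fun i => ((i.2.2 : ℝ) - (i.1 : ℝ)) ^ 2 * q i)
      (∫ ω, ((Y ω : ℝ) - (π₁ ω : ℝ)) ^ 2 ∂μ) :=
    hasSum_congr' HS2 (fun i => by rw [htoReal i]) rfl
  -- evaluate the first moment
  have hEX : ∫ ω, ((Y ω : ℝ) - (π₁ ω : ℝ)) ∂μ = (P - 1) * L1 + P * L2 := by
    rw [← HS1'.tsum_eq,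
      Summable.tsum_prod' HS1'.summable (fun n₁ => HS1'.summable.prod_factor n₁)]
    have step1 : ∀ n₁ n₂ : ℕ,
        HasSum (fun k : ℕ => (((n₁, n₂, k) : ℕ × ℕ × ℕ).2.2 - ((n₁, n₂, k) : ℕ × ℕ × ℕ).1 : ℝ)
          * q (n₁, n₂, k))
        (pois L1 n₁ * pois L2 n₂ * (((n₁ : ℝ) + n₂) * P - n₁)) := by
      intro n₁ n₂
      refine hasSum_congr'
        ((hasSum_pois_quad (((n₁ + n₂ : ℕ) : ℝ) * P) 0 1 (-(n₁ : ℝ))).mul_right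
          (pois L1 n₁ * pois L2 n₂)) (fun k => ?_) ?_
      · rw [hqdef]; simp only; push_cast; ring
      · push_cast; ring
    rw [tsum_congr (fun n₁ => Summable.tsum_prod' (HS1'.summable.prod_factor n₁)
      (fun n₂ => (HS1'.summable.prod_factor n₁).prod_factor n₂))]
    rw [tsum_congr (fun n₁ => tsum_congr (fun n₂ => (step1 n₁ n₂).tsum_eq))]
    have step2 : ∀ n₁ : ℕ,
        HasSum (fun n₂ : ℕ => pois L1 n₁ * pois L2 n₂ * (((n₁ : ℝ) + n₂) * P - n₁))
        (pois L1 n₁ * ((n₁ : ℝ) * P + L2 * P - n₁)) := by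
      intro n₁
      refine hasSum_congr'
        (hasSum_pois_quad L2 0 (pois L1 n₁ * P) (pois L1 n₁ * ((n₁ : ℝ) * P - n₁)))
        (fun n₂ => by ring) (by ring)
    rw [tsum_congr (fun n₁ => (step2 n₁).tsum_eq)]
    have step3 : HasSum (fun n₁ : ℕ => pois L1 n₁ * ((n₁ : ℝ) * P + L2 * P - n₁))
        ((P - 1) * L1 + P * L2) :=
      hasSum_congr' (hasSum_pois_quad L1 0 (P - 1) (L2 * P)) (fun n₁ => by ring) (by ring)
    exact step3.tsum_eq
  -- evaluate the second moment
  have hEX2 : ∫ ω, ((Y ω : ℝ) - (π₁ ω : ℝ)) ^ 2 ∂μ =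
      (P - 1) ^ 2 * (L1 + L1 ^ 2) + (2 * P * (P - 1) * L2 + P) * L1 +
        (P ^ 2 * (L2 + L2 ^ 2) + P * L2) := by
    rw [← HS2'.tsum_eq,
      Summable.tsum_prod' HS2'.summable (fun n₁ => HS2'.summable.prod_factor n₁)]
    have step1 : ∀ n₁ n₂ : ℕ,
        HasSum (fun k : ℕ => (((k : ℝ) - n₁) ^ 2) * q (n₁, n₂, k))
        (pois L1 n₁ * pois L2 n₂ *
          (((n₁ : ℝ) + n₂) * P + (((n₁ : ℝ) + n₂) * P) ^ 2
            - 2 * n₁ * (((n₁ : ℝ) + n₂) * P) + (n₁ : ℝ) ^ 2)) := by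
      intro n₁ n₂
      refine hasSum_congr'
        ((hasSum_pois_quad (((n₁ + n₂ : ℕ) : ℝ) * P) 1 (-2 * (n₁ : ℝ)) ((n₁ : ℝ) ^ 2)).mul_right
          (pois L1 n₁ * pois L2 n₂)) (fun k => ?_) ?_
      · rw [hqdef]; simp only; push_cast; ring
      · push_cast; ring
    rw [tsum_congr (fun n₁ => Summable.tsum_prod' (HS2'.summable.prod_factor n₁)
      (fun n₂ => (HS2'.summable.prod_factor n₁).prod_factor n₂))]
    rw [tsum_congr (fun n₁ => tsum_congr (fun n₂ => (step1 n₁ n₂).tsum_eq))]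
    have step2 : ∀ n₁ : ℕ,
        HasSum (fun n₂ : ℕ => pois L1 n₁ * pois L2 n₂ *
          (((n₁ : ℝ) + n₂) * P + (((n₁ : ℝ) + n₂) * P) ^ 2
            - 2 * n₁ * (((n₁ : ℝ) + n₂) * P) + (n₁ : ℝ) ^ 2))
        (pois L1 n₁ * (P ^ 2 * (L2 + L2 ^ 2) + (P + 2 * P * (P - 1) * (n₁ : ℝ)) * L2 +
          ((n₁ : ℝ) * P + (P - 1) ^ 2 * (n₁ : ℝ) ^ 2))) := by
      intro n₁
      refine hasSum_congr'
        (hasSum_pois_quad L2 (pois L1 n₁ * P ^ 2)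
          (pois L1 n₁ * (P + 2 * P * (P - 1) * (n₁ : ℝ)))
          (pois L1 n₁ * ((n₁ : ℝ) * P + (P - 1) ^ 2 * (n₁ : ℝ) ^ 2)))
        (fun n₂ => by ring) (by ring)
    rw [tsum_congr (fun n₁ => (step2 n₁).tsum_eq)]
    have step3 : HasSum (fun n₁ : ℕ => pois L1 n₁ *
        (P ^ 2 * (L2 + L2 ^ 2) + (P + 2 * P * (P - 1) * (n₁ : ℝ)) * L2 +
          ((n₁ : ℝ) * P + (P - 1) ^ 2 * (n₁ : ℝ) ^ 2)))
        ((P - 1) ^ 2 * (L1 + L1 ^ 2) + (2 * P * (P - 1) * L2 + P) * L1 +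
          (P ^ 2 * (L2 + L2 ^ 2) + P * L2)) :=
      hasSum_congr' (hasSum_pois_quad L1 ((P - 1) ^ 2) (2 * P * (P - 1) * L2 + P)
        (P ^ 2 * (L2 + L2 ^ 2) + P * L2)) (fun n₁ => by ring) (by ring)
    exact step3.tsum_eq
  -- conclude
  rw [variance_eq_sub hint]
  have hpow : (fun ω => (Y ω : ℝ) - (π₁ ω : ℝ)) ^ 2 =
      fun ω => ((Y ω : ℝ) - (π₁ ω : ℝ)) ^ 2 := rfl
  rw [show μ[(fun ω => (Y ω : ℝ) - (π₁ ω : ℝ)) ^ 2] =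
      ∫ ω, ((Y ω : ℝ) - (π₁ ω : ℝ)) ^ 2 ∂μ from by rw [hpow]]
  rw [hEX, hEX2, hPdef, hL1def, hL2def]
  field_simp
  ring
end

section
/- In the equal-interval case U₁ = U₂ = NL with m₂ = qm₁, the solution of the normal-approximation equation for the Poisson parametric test yields N = (3 z_δ²/(m₁L)) · (1+q)/(1−q)², which exceeds the non-parametric requirement (2 z_δ²/(m₁L)) · (1+q)/(1−q)² by a factor 3/2. -/
/-- In the equal-interval case U₁ = U₂ = NL with m₂ = qm₁, the solution of the
normal-approximation equation for the Poisson parametric test yields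
N = (3 z_δ²/(m₁L)) · (1+q)/(1−q)², which exceeds the non-parametric requirement
(2 z_δ²/(m₁L)) · (1+q)/(1−q)² by a factor 3/2.
The equation is E[X₂]/√Var(X₂) = z_δ with U₁ = U₂ = NL and m₂ = qm₁, where
E[X₂] = U₁U₂/(U₁+U₂)(m₂−m₁) and
Var(X₂) = [m₁U₁(U₁(U₁+U₂)+U₂²) + m₂U₁U₂(2U₁+U₂)]/(U₁+U₂)². -/
theorem required_centres_parametric (m₁ L q z N : ℝ) (hm₁ : 0 < m₁) (hL : 0 < L)
    (hq : q ∈ Set.Ioo (0:ℝ) 1) (hz : z < 0) (hN : 0 < N)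
    (heq : ((N * L) * (N * L) / (N * L + N * L)) * (q * m₁ - m₁) /
        Real.sqrt ((m₁ * (N * L) * ((N * L) * (N * L + N * L) + (N * L) ^ 2) +
            (q * m₁) * (N * L) * (N * L) * (2 * (N * L) + N * L)) /
          (N * L + N * L) ^ 2) = z) :
    N = 3 * z ^ 2 / (m₁ * L) * (1 + q) / (1 - q) ^ 2 ∧
    N = (3 / 2) * (2 * z ^ 2 / (m₁ * L) * (1 + q) / (1 - q) ^ 2) := by
  obtain ⟨hq0, hq1⟩ := hq
  have hU : 0 < N * L := mul_pos hN hL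
  have harg : (m₁ * (N * L) * ((N * L) * (N * L + N * L) + (N * L) ^ 2) +
      (q * m₁) * (N * L) * (N * L) * (2 * (N * L) + N * L)) / (N * L + N * L) ^ 2
      = 3 * m₁ * (N * L) * (1 + q) / 4 := by
    field_simp
    ring
  rw [harg] at heq
  have hargpos : 0 < 3 * m₁ * (N * L) * (1 + q) / 4 := by positivity
  have hs : Real.sqrt (3 * m₁ * (N * L) * (1 + q) / 4) ^ 2
      = 3 * m₁ * (N * L) * (1 + q) / 4 := Real.sq_sqrt hargpos.le
  have hspos : 0 < Real.sqrt (3 * m₁ * (N * L) * (1 + q) / 4) :=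
    Real.sqrt_pos.mpr hargpos
  have h2 := (div_eq_iff hspos.ne').mp heq
  have h3 : (((N * L) * (N * L) / (N * L + N * L)) * (q * m₁ - m₁)) ^ 2
      = z ^ 2 * (3 * m₁ * (N * L) * (1 + q) / 4) := by
    rw [h2, mul_pow, hs]
  have hden : N * L + N * L ≠ 0 := by positivity
  have hc : m₁ * (N * L) * (4 * (N * L) ^ 2) ≠ 0 := by positivity
  have h5 : m₁ * (N * L) * (4 * (N * L) ^ 2) *
      (N * L * (1 - q) ^ 2 * m₁ - 3 * z ^ 2 * (1 + q)) = 0 := by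
    field_simp at h3
    linear_combination (m₁ * (N * L) * (N * L) ^ 2) * h3
  have key : N * L * (1 - q) ^ 2 * m₁ = 3 * z ^ 2 * (1 + q) := by
    rcases mul_eq_zero.mp h5 with h | h
    · exact absurd h hc
    · linarith
  have hq1' : (1 - q) ≠ 0 := by
    intro h; linarith [h]
  have hNval : N = (3 * z ^ 2 * (1 + q)) / (m₁ * L * (1 - q) ^ 2) := by
    rw [eq_div_iff (by positivity)]
    linear_combination key
  constructor
  · rw [hNval]; field_simp
  · rw [hNval]; field_simp
end
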